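/- For every given integer a > 0, there exist at most finitely many pairs (m, k) with m a positive integer and k ≥ 3 an integer such that -m+ζ_k and -(m+a)+ζ_k are multiplicatively dependent. -/

import Mathlib

open Polynomial

/-- Two elements of a field are *multiplicatively independent* if the only integers `r, s`
with `α ^ r = β ^ s` are `r = s = 0`. -/
def MultIndep {F : Type*} [Field F] (α β : F) : Prop :=
  ∀ r s : ℤ, α ^ r = β ^ s → r = 0 ∧ s = 0

/-- An element of a field is a *root of unity* if some positive power of it equals `1`. -/
def IsRootOfUnity {F : Type*} [Field F] (α : F) : Prop :=
  ∃ n : ℕ, 0 < n ∧ α ^ n = 1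

-- Lemma N
lemma two_mul_le_of_pow_eq_pow {A B r s : ℕ} (hA : 2 ≤ A) (hB : 1 ≤ B)
    (h : A ^ r = B ^ s) (hs : 1 ≤ s) (hrs : s < r) : 2 * A ≤ B := by
  have hA0 : A ≠ 0 := by omega
  have hB0 : B ≠ 0 := by omega
  -- factorization relation
  have hf : ∀ p : ℕ, r * A.factorization p = s * B.factorization p := by
    intro p
    have := congrArg (fun n : ℕ => n.factorization p) h
    simpa [Nat.factorization_pow] using this
  have hle : ∀ p : ℕ, A.factorization p ≤ B.factorization p := by
    intro p
    by_contra hlt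
    push_neg at hlt
    have h1 := hf p
    nlinarith [h1]
  have hdvd : A ∣ B := (Nat.factorization_le_iff_dvd hA0 hB0).mp (Finsupp.le_def.mpr (fun p => hle p))
  obtain ⟨C, hC⟩ := hdvd
  have hC0 : C ≠ 0 := by rintro rfl; simp at hC; omega
  -- pick a prime dividing A
  obtain ⟨p, hp, hpA⟩ := Nat.exists_prime_and_dvd (by omega : A ≠ 1)
  have hpf : 1 ≤ A.factorization p := (Nat.Prime.factorization_pos_of_dvd hp hA0 hpA)
  have hstrict : A.factorization p < B.factorization p := by
    have h1 := hf p
    nlinarith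
  have hpC : p ∣ C := by
    have : B.factorization p = A.factorization p + C.factorization p := by
      rw [hC, Nat.factorization_mul hA0 hC0]; simp
    have hCf : 1 ≤ C.factorization p := by omega
    exact Nat.dvd_of_factorization_pos (by omega)
  have : 2 ≤ C := le_trans hp.two_le (Nat.le_of_dvd (by omega) hpC)
  calc 2 * A ≤ C * A := by nlinarith
  _ = B := by rw [hC, mul_comm]

lemma totient_le_four {k : ℕ} (hk : 0 < k) (h : k.totient ≤ 4) : k ≤ 12 := by
  have htpos : 0 < k.totient := Nat.totient_pos.mpr hk
  have hdvdtot : ∀ d : ℕ, d ∣ k → d.totient ≤ 4 := by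
    intro d hd
    exact le_trans (Nat.le_of_dvd htpos (Nat.totient_dvd_of_dvd hd)) h
  have h120 : k ∣ 120 := by
    rw [Nat.dvd_iff_prime_pow_dvd_dvd]
    intro p e hp hpe
    have hp' : p.Prime := hp
    have hp2 : 2 ≤ p := hp'.two_le
    rcases Nat.eq_zero_or_pos e with rfl | he
    · simp
    have hpk : p ∣ k := dvd_trans (dvd_pow_self p (by omega)) hpe
    have hple : p ≤ 5 := by
      have := hdvdtot p hpk
      rw [Nat.totient_prime hp'] at this
      omega
    have key : ∀ q : ℕ, q ∣ k → ¬ (q.totient ≤ 4) → False := fun q hq hnq => hnq (hdvdtot q hq)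
    interval_cases p
    · have he3 : e ≤ 3 := by
        by_contra h4
        have h4' : 4 ≤ e := by omega
        have : (16:ℕ) ∣ 2^e := by calc (16:ℕ) = 2^4 := by norm_num
                                     _ ∣ 2^e := pow_dvd_pow 2 h4'
        exact key 16 (dvd_trans this hpe) (by decide)
      exact dvd_trans (pow_dvd_pow 2 he3) (by norm_num)
    · have he1 : e ≤ 1 := by
        by_contra h2
        have h2' : 2 ≤ e := by omega
        have : (9:ℕ) ∣ 3^e := by calc (9:ℕ) = 3^2 := by norm_num
                                    _ ∣ 3^e := pow_dvd_pow 3 h2'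
        exact key 9 (dvd_trans this hpe) (by decide)
      exact dvd_trans (pow_dvd_pow 3 he1) (by norm_num)
    · exact absurd hp' (by norm_num)
    · have he1 : e ≤ 1 := by
        by_contra h2
        have h2' : 2 ≤ e := by omega
        have : (25:ℕ) ∣ 5^e := by calc (25:ℕ) = 5^2 := by norm_num
                                     _ ∣ 5^e := pow_dvd_pow 5 h2'
        exact key 25 (dvd_trans this hpe) (by decide)
      exact dvd_trans (pow_dvd_pow 5 he1) (by norm_num)
  have hk120 : k ≤ 120 := Nat.le_of_dvd (by norm_num) h120
  by_contra hgt
  push_neg at hgt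
  have : ¬ (k ∣ 120 ∧ k.totient ≤ 4 ∧ 13 ≤ k ∧ k ≤ 120) := by
    revert h120
    interval_cases k <;> decide
  exact this ⟨h120, h, hgt, hk120⟩

set_option maxHeartbeats 1600000 in
lemma BIGreal {m n c1 c2 c3 cs : ℝ} {r s : ℤ}
    (hm : 1 ≤ m) (hn : m + 1 ≤ n)
    (hc1 : c1 < 1) (h12 : c2 < c1) (h23 : c3 < c2) (hc3 : -1 < c3)
    (hcs1 : -1 ≤ cs) (hcs2 : cs < 1/2)
    (e1 : (r:ℝ) * Real.log (m^2 - 2*m*c1 + 1) = (s:ℝ) * Real.log (n^2 - 2*n*c1 + 1))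
    (e2 : (r:ℝ) * Real.log (m^2 - 2*m*c2 + 1) = (s:ℝ) * Real.log (n^2 - 2*n*c2 + 1))
    (e3 : (r:ℝ) * Real.log (m^2 - 2*m*c3 + 1) = (s:ℝ) * Real.log (n^2 - 2*n*c3 + 1))
    (es : (r:ℝ) * Real.log (m^2 - 2*m*cs + 1) = (s:ℝ) * Real.log (n^2 - 2*n*cs + 1)) :
    r = 0 ∧ s = 0 := by
  have hm0 : 0 < m := by linarith
  have hn2 : 2 ≤ n := by linarith
  have hApos : ∀ c : ℝ, -1 ≤ c → c < 1 → 0 < m^2 - 2*m*c + 1 := by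
    intro c h1 h2
    nlinarith [sq_nonneg (m - 1), mul_pos hm0 (show (0:ℝ) < 1 - c by linarith)]
  have hBgt1 : ∀ c : ℝ, c < 1 → 1 < n^2 - 2*n*c + 1 := by
    intro c h2
    nlinarith [mul_pos (show (0:ℝ) < n by linarith) (show (0:ℝ) < n - 2*c by linarith)]
  have hBpos : ∀ c : ℝ, c < 1 → 0 < n^2 - 2*n*c + 1 := fun c h => lt_trans one_pos (hBgt1 c h)
  -- case r = 0
  rcases eq_or_ne r 0 with hr | hr
  · subst hr
    refine ⟨rfl, ?_⟩
    simp only [Int.cast_zero, zero_mul] at e1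
    have hlog : Real.log (n^2 - 2*n*c1 + 1) ≠ 0 :=
      ne_of_gt (Real.log_pos (hBgt1 c1 hc1))
    have : (s:ℝ) = 0 := by
      rcases mul_eq_zero.mp e1.symm with h | h
      · exact h
      · exact absurd h hlog
    exact_mod_cast this
  rcases eq_or_ne s 0 with hs | hs
  · subst hs
    exfalso
    simp only [Int.cast_zero, zero_mul] at e1 e2
    have hA1 : m^2 - 2*m*c1 + 1 = 1 := by
      have hlog : Real.log (m^2 - 2*m*c1 + 1) = 0 := by
        rcases mul_eq_zero.mp e1 with h | h
        · exact absurd h (by exact_mod_cast hr)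
        · exact h
      rcases Real.log_eq_zero.mp hlog with h | h | h
      · exact absurd h (ne_of_gt (hApos c1 (by linarith) hc1))
      · exact h
      · nlinarith [hApos c1 (by linarith) hc1]
    have hA2 : m^2 - 2*m*c2 + 1 = 1 := by
      have hlog : Real.log (m^2 - 2*m*c2 + 1) = 0 := by
        rcases mul_eq_zero.mp e2 with h | h
        · exact absurd h (by exact_mod_cast hr)
        · exact h
      rcases Real.log_eq_zero.mp hlog with h | h | h
      · exact absurd h (ne_of_gt (hApos c2 (by linarith) (by linarith)))
      · exact h
      · nlinarith [hApos c2 (by linarith) (by linarith)]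
    have : c1 = c2 := by nlinarith
    linarith
  -- both nonzero
  exfalso
  have hrR : (r:ℝ) ≠ 0 := by exact_mod_cast hr
  set u : ℝ := (s:ℝ) / (r:ℝ) with hu
  have hrpow : ∀ c : ℝ, -1 ≤ c → c < 1 →
      ((r:ℝ) * Real.log (m^2 - 2*m*c + 1) = (s:ℝ) * Real.log (n^2 - 2*n*c + 1)) →
      m^2 - 2*m*c + 1 = (n^2 - 2*n*c + 1) ^ u := by
    intro c h1 h2 he
    have hlogA : Real.log (m^2 - 2*m*c + 1) = Real.log (n^2 - 2*n*c + 1) * u := by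
      rw [hu, mul_div_assoc', eq_div_iff hrR]; linarith [he]
    rw [Real.rpow_def_of_pos (hBpos c h2), ← hlogA, Real.exp_log (hApos c h1 h2)]
  have h1' := hrpow c1 (by linarith) hc1 e1
  have h2' := hrpow c2 (by linarith) (by linarith) e2
  have h3' := hrpow c3 (by linarith) (by linarith) e3
  have hs' := hrpow cs hcs1 (by linarith) es
  rcases lt_trichotomy u 0 with hu0 | hu0 | hu0
  · -- u < 0 : use cs
    have hlt : m^2 - 2*m*cs + 1 < 1 := by
      rw [hs']
      exact Real.rpow_lt_one_of_one_lt_of_neg (hBgt1 cs (by linarith)) hu0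
    have h1 : m^2 < 2*m*cs := by linarith
    have h2 : 2*m*cs < 2*m*(1/2) := by
      apply mul_lt_mul_of_pos_left hcs2
      linarith
    have h3 : m * 1 ≤ m * m := mul_le_mul_of_nonneg_left hm (le_of_lt hm0)
    have h4 : m^2 = m*m := sq m
    linarith
  · -- u = 0
    rw [hu0, Real.rpow_zero] at h1' h2'
    have h1'' : (2*m)*c1 = (2*m)*c2 := by linarith
    have : c1 = c2 := mul_left_cancel₀ (by positivity) h1''
    linarith
  rcases lt_trichotomy u 1 with hu1 | hu1 | hu1
  · -- 0 < u < 1 : concave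
    set lam : ℝ := (c2 - c3) / (c1 - c3) with hlam
    set mu : ℝ := (c1 - c2) / (c1 - c3) with hmu
    have hc13 : 0 < c1 - c3 := by linarith
    have hlam0 : 0 < lam := div_pos (by linarith) hc13
    have hmu0 : 0 < mu := div_pos (by linarith) hc13
    have hne13 : c1 - c3 ≠ 0 := ne_of_gt hc13
    have hsum : lam + mu = 1 := by rw [hlam, hmu]; field_simp; ring
    have hc2comb : lam * c1 + mu * c3 = c2 := by
      rw [hlam, hmu]; field_simp; ring
    have hBne : n^2 - 2*n*c1 + 1 ≠ n^2 - 2*n*c3 + 1 := by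
      intro h
      have h' : (2*n)*c1 = (2*n)*c3 := by linarith
      have := mul_left_cancel₀ (show (2*n) ≠ 0 by positivity) h'
      linarith
    have hBcomb : lam • (n^2 - 2*n*c1 + 1) + mu • (n^2 - 2*n*c3 + 1) = n^2 - 2*n*c2 + 1 := by
      simp only [smul_eq_mul]
      linear_combination (n^2+1) * hsum - (2*n) * hc2comb
    have hAcomb : lam * (m^2 - 2*m*c1 + 1) + mu * (m^2 - 2*m*c3 + 1) = m^2 - 2*m*c2 + 1 := by
      linear_combination (m^2+1) * hsum - (2*m) * hc2comb
    have hkey := (Real.strictConcaveOn_rpow hu0 hu1).2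
      (Set.mem_Ici.mpr (le_of_lt (hBpos c1 hc1)))
      (Set.mem_Ici.mpr (le_of_lt (hBpos c3 (by linarith)))) hBne hlam0 hmu0 hsum
    rw [hBcomb] at hkey
    simp only [smul_eq_mul] at hkey
    rw [← h1', ← h3', ← h2'] at hkey
    rw [hAcomb] at hkey
    exact lt_irrefl _ hkey
  · -- u = 1
    rw [hu1, Real.rpow_one] at h1'
    clear h2' h3' hs' e1 e2 e3 es hrpow
    nlinarith [h1', mul_pos (show (0:ℝ) < n - m by linarith) (show (0:ℝ) < n + m - 2*c1 by linarith)]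
  · -- u > 1 : convex
    set lam : ℝ := (c2 - c3) / (c1 - c3) with hlam
    set mu : ℝ := (c1 - c2) / (c1 - c3) with hmu
    have hc13 : 0 < c1 - c3 := by linarith
    have hlam0 : 0 < lam := div_pos (by linarith) hc13
    have hmu0 : 0 < mu := div_pos (by linarith) hc13
    have hne13 : c1 - c3 ≠ 0 := ne_of_gt hc13
    have hsum : lam + mu = 1 := by rw [hlam, hmu]; field_simp; ring
    have hc2comb : lam * c1 + mu * c3 = c2 := by
      rw [hlam, hmu]; field_simp; ring
    have hBne : n^2 - 2*n*c1 + 1 ≠ n^2 - 2*n*c3 + 1 := by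
      intro h
      have h' : (2*n)*c1 = (2*n)*c3 := by linarith
      have := mul_left_cancel₀ (show (2*n) ≠ 0 by positivity) h'
      linarith
    have hBcomb : lam • (n^2 - 2*n*c1 + 1) + mu • (n^2 - 2*n*c3 + 1) = n^2 - 2*n*c2 + 1 := by
      simp only [smul_eq_mul]
      linear_combination (n^2+1) * hsum - (2*n) * hc2comb
    have hAcomb : lam * (m^2 - 2*m*c1 + 1) + mu * (m^2 - 2*m*c3 + 1) = m^2 - 2*m*c2 + 1 := by
      linear_combination (m^2+1) * hsum - (2*m) * hc2comb
    have hkey := (strictConvexOn_rpow hu1).2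
      (Set.mem_Ici.mpr (le_of_lt (hBpos c1 hc1)))
      (Set.mem_Ici.mpr (le_of_lt (hBpos c3 (by linarith)))) hBne hlam0 hmu0 hsum
    rw [hBcomb] at hkey
    simp only [smul_eq_mul] at hkey
    rw [← h1', ← h3', ← h2'] at hkey
    rw [hAcomb] at hkey
    exact lt_irrefl _ hkey
lemma arith_bound {a M d : ℕ} (ha : 1 ≤ a) (hM : 8*a + 16 ≤ M) (hd1 : 1 ≤ d) (hd4 : d ≤ 4) :
    (M + a + 2)^d < 2 * M^d := by
  have hM1 : 1 ≤ M := by omega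
  have h8 : 8*(M + a + 2) ≤ 9*M := by omega
  have h4 : (8*(M+a+2))^4 ≤ (9*M)^4 := Nat.pow_le_pow_left h8 4
  have h4' : 4096*(M+a+2)^4 ≤ 6561*M^4 := by
    calc 4096*(M+a+2)^4 = (8*(M+a+2))^4 := by ring
    _ ≤ (9*M)^4 := h4
    _ = 6561*M^4 := by ring
  have hM4 : 1 ≤ M^4 := Nat.one_le_pow _ _ (by omega)
  have hkey4 : (M+a+2)^4 < 2*M^4 := by nlinarith
  have hcancel : (M+a+2)^d * M^(4-d) < (2*M^d) * M^(4-d) := by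
    calc (M+a+2)^d * M^(4-d) ≤ (M+a+2)^d * (M+a+2)^(4-d) := by
          exact Nat.mul_le_mul_left _ (Nat.pow_le_pow_left (by omega) _)
    _ = (M+a+2)^4 := by rw [← pow_add]; congr 1; omega
    _ < 2*M^4 := hkey4
    _ = (2*M^d) * M^(4-d) := by rw [mul_assoc, ← pow_add]; congr 2; omega
  exact Nat.lt_of_mul_lt_mul_right hcancel

lemma one_lt_of_sq {x : ℝ} (h0 : 0 ≤ x) (h : 1 < x^2) : 1 < x := by nlinarith
lemma le_of_sq_le' {x y : ℝ} (h0 : 0 ≤ x) (hy : 0 ≤ y) (h : x^2 ≤ y^2) : x ≤ y := by nlinarith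
lemma lt_of_sq_lt' {x y : ℝ} (h0 : 0 ≤ x) (hy : 0 ≤ y) (h : x^2 < y^2) : x < y := by nlinarith
section ThreeCop
open Finset

lemma coprime_sub' {k j : ℕ} (hj : j ≤ k) (h : k.Coprime j) : k.Coprime (k - j) := by
  have h1 : Nat.gcd k (k - j) ∣ k := Nat.gcd_dvd_left _ _
  have h2 : Nat.gcd k (k - j) ∣ k - j := Nat.gcd_dvd_right _ _
  have h3 : Nat.gcd k (k - j) ∣ j := by
    have := Nat.dvd_sub h1 h2
    rwa [Nat.sub_sub_self hj] at this
  have : Nat.gcd k (k - j) ∣ Nat.gcd k j := Nat.dvd_gcd h1 h3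
  rw [h] at this
  exact Nat.eq_one_of_dvd_one this

lemma exists_three_coprime {k : ℕ} (hk : 3 ≤ k) (h5 : 5 ≤ k.totient) :
    ∃ j1 j2 j3 : ℕ, 0 < j1 ∧ j1 < j2 ∧ j2 < j3 ∧ 2 * j3 < k ∧
      k.Coprime j1 ∧ k.Coprime j2 ∧ k.Coprime j3 := by
  classical
  set U : Finset ℕ := {a ∈ range k | k.Coprime a} with hU
  set L : Finset ℕ := {a ∈ U | 2 * a < k} with hL
  have hcardU : U.card = k.totient := rfl
  have hsub : U ⊆ L ∪ L.image (fun j => k - j) := by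
    intro j hj
    simp only [hU, mem_filter, mem_range] at hj
    obtain ⟨hjk, hcop⟩ := hj
    have hj0 : j ≠ 0 := by
      rintro rfl
      simp [Nat.Coprime] at hcop
      omega
    have hne : 2 * j ≠ k := by
      rintro h
      have : Nat.gcd k j = j := by
        rw [← h]; exact Nat.gcd_eq_right ⟨2, by ring⟩
      rw [hcop] at this
      omega
    rcases lt_or_gt_of_ne hne with hlt | hgt
    · refine mem_union_left _ ?_
      simp only [hL, hU, mem_filter, mem_range]
      exact ⟨⟨hjk, hcop⟩, hlt⟩
    · refine mem_union_right _ ?_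
      refine mem_image.mpr ⟨k - j, ?_, by omega⟩
      simp only [hL, hU, mem_filter, mem_range]
      exact ⟨⟨by omega, coprime_sub' (by omega) hcop⟩, by omega⟩
  have hcard : k.totient ≤ 2 * L.card := by
    calc k.totient = U.card := rfl
    _ ≤ (L ∪ L.image (fun j => k - j)).card := card_le_card hsub
    _ ≤ L.card + (L.image (fun j => k - j)).card := card_union_le _ _
    _ ≤ L.card + L.card := add_le_add le_rfl card_image_le
    _ = 2 * L.card := by ring
  have h3 : 3 ≤ L.card := by omega
  obtain ⟨t, hts, htc⟩ := Finset.exists_subset_card_eq h3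
  obtain ⟨x, y, z, hxy, hxz, hyz, rfl⟩ := Finset.card_eq_three.mp htc
  have hmem : ∀ w ∈ ({x, y, z} : Finset ℕ), 0 < w ∧ 2 * w < k ∧ k.Coprime w := by
    intro w hw
    have := hts hw
    simp only [hL, hU, mem_filter, mem_range] at this
    obtain ⟨⟨h1, h2⟩, h3⟩ := this
    refine ⟨?_, h3, h2⟩
    rcases Nat.eq_zero_or_pos w with rfl | h
    · simp [Nat.Coprime] at h2; omega
    · exact h
  have hx := hmem x (by simp)
  have hy := hmem y (by simp)
  have hz := hmem z (by simp)
  -- order the three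
  rcases lt_trichotomy x y with h1 | h1 | h1
  · rcases lt_trichotomy y z with h2 | h2 | h2
    · exact ⟨x, y, z, hx.1, h1, h2, hz.2.1, hx.2.2, hy.2.2, hz.2.2⟩
    · omega
    · rcases lt_trichotomy x z with h3 | h3 | h3
      · exact ⟨x, z, y, hx.1, h3, h2, hy.2.1, hx.2.2, hz.2.2, hy.2.2⟩
      · omega
      · exact ⟨z, x, y, hz.1, h3, h1, hy.2.1, hz.2.2, hx.2.2, hy.2.2⟩
  · omega
  · rcases lt_trichotomy x z with h2 | h2 | h2
    · exact ⟨y, x, z, hy.1, h1, h2, hz.2.1, hy.2.2, hx.2.2, hz.2.2⟩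
    · omega
    · rcases lt_trichotomy y z with h3 | h3 | h3
      · exact ⟨y, z, x, hy.1, h3, h2, hx.2.1, hy.2.2, hz.2.2, hx.2.2⟩
      · omega
      · exact ⟨z, y, x, hz.1, h3, h1, hx.2.1, hz.2.2, hy.2.2, hx.2.2⟩

lemma exists_mid_coprime {k : ℕ} (hk : 7 ≤ k) :
    ∃ j : ℕ, k.Coprime j ∧ 0 < j ∧ k < 6 * j ∧ 6 * j < 5 * k := by
  rcases Nat.even_or_odd k with he | ho
  · obtain ⟨l, rfl⟩ := he
    rcases Nat.even_or_odd l with hle | hlo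
    · -- k ≡ 0 mod 4 : j = l - 1 (odd)
      refine ⟨l - 1, ?_, by omega, by omega, by omega⟩
      have hodd : ¬ (2 ∣ (l - 1)) := by
        obtain ⟨u, rfl⟩ := hle; omega
      have h1 : Nat.gcd (l+l) (l-1) ∣ l + l := Nat.gcd_dvd_left _ _
      have h2 : Nat.gcd (l+l) (l-1) ∣ l - 1 := Nat.gcd_dvd_right _ _
      have h3 : Nat.gcd (l+l) (l-1) ∣ 2 := by
        have : Nat.gcd (l+l) (l-1) ∣ (l-1) + (l-1) := Nat.dvd_add h2 h2
        have h4 := Nat.dvd_sub h1 this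
        have he : l + l - ((l-1) + (l-1)) = 2 := by omega
        rwa [he] at h4
      have : Nat.gcd (l+l) (l-1) = 1 ∨ Nat.gcd (l+l) (l-1) = 2 := (Nat.dvd_prime Nat.prime_two).mp h3
      rcases this with h | h
      · exact h
      · exact absurd (h ▸ h2) hodd
    · -- k ≡ 2 mod 4 : j = l - 2 (odd)
      refine ⟨l - 2, ?_, by omega, by omega, by omega⟩
      have hodd : ¬ (2 ∣ (l - 2)) := by
        obtain ⟨u, hu⟩ := hlo; omega
      have h1 : Nat.gcd (l+l) (l-2) ∣ l + l := Nat.gcd_dvd_left _ _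
      have h2 : Nat.gcd (l+l) (l-2) ∣ l - 2 := Nat.gcd_dvd_right _ _
      have h3 : Nat.gcd (l+l) (l-2) ∣ 4 := by
        have : Nat.gcd (l+l) (l-2) ∣ (l-2) + (l-2) := Nat.dvd_add h2 h2
        have h4 := Nat.dvd_sub h1 this
        have he : l + l - ((l-2) + (l-2)) = 4 := by omega
        rwa [he] at h4
      -- gcd is odd and divides 4, so it is 1
      set d := Nat.gcd (l+l) (l-2) with hd
      have hd1 : 1 ≤ d := Nat.gcd_pos_of_pos_left _ (by omega)
      have hd4 : d ≤ 4 := Nat.le_of_dvd (by norm_num) h3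
      interval_cases d
      · exact hd.symm
      · exact absurd h2 hodd
      · exfalso; revert h3; norm_num
      · exfalso; exact hodd (dvd_trans ⟨2, rfl⟩ h2)
  · -- k odd : k = 2j+1, j = (k-1)/2
    obtain ⟨j, rfl⟩ := ho
    refine ⟨j, ?_, by omega, by omega, by omega⟩
    have h1 : Nat.gcd (2*j+1) j ∣ 2*j+1 := Nat.gcd_dvd_left _ _
    have h2 : Nat.gcd (2*j+1) j ∣ j := Nat.gcd_dvd_right _ _
    have h3 : Nat.gcd (2*j+1) j ∣ 1 := by
      have : Nat.gcd (2*j+1) j ∣ 2*j := Dvd.dvd.mul_left h2 2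
      have h4 := Nat.dvd_sub h1 this
      simpa using h4
    exact Nat.eq_one_of_dvd_one h3
end ThreeCop

lemma exists_embedding (k : ℕ+) {ζ : CyclotomicField k ℚ}
    (hζ : IsPrimitiveRoot ζ (k : ℕ)) {ω : ℂ} (hω : IsPrimitiveRoot ω (k : ℕ)) :
    ∃ σ : CyclotomicField k ℚ →+* ℂ, σ ζ = ω := by
  haveI : NeZero (((k : ℕ) : ℚ)) := ⟨by exact_mod_cast k.pos.ne'⟩
  haveI : IsCyclotomicExtension {(k : ℕ)} ℚ (CyclotomicField k ℚ) :=
    CyclotomicField.isCyclotomicExtension _ _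
  have hirr : Irreducible (cyclotomic (k : ℕ) ℚ) := cyclotomic.irreducible_rat k.pos
  have hmem : ω ∈ primitiveRoots (k : ℕ) ℂ := (mem_primitiveRoots k.pos).mpr hω
  set e := hζ.embeddingsEquivPrimitiveRoots ℂ hirr
  refine ⟨(e.symm ⟨ω, hmem⟩ : CyclotomicField k ℚ →ₐ[ℚ] ℂ).toRingHom, ?_⟩
  have := hζ.embeddingsEquivPrimitiveRoots_apply_coe ℂ hirr (e.symm ⟨ω, hmem⟩)
  rw [Equiv.apply_symm_apply] at this
  exact this.symm

set_option maxHeartbeats 2000000 in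
lemma perJ (k : ℕ+) (hk : 3 ≤ (k:ℕ)) {ζ : CyclotomicField k ℚ} (hζ : IsPrimitiveRoot ζ (k:ℕ))
    (m n : ℕ) (r s : ℤ)
    (hdep : (-(m : CyclotomicField k ℚ) + ζ) ^ r = (-(n : CyclotomicField k ℚ) + ζ) ^ s)
    (j : ℕ) (hj : Nat.Coprime j (k:ℕ)) :
    (r:ℝ) * Real.log ((m:ℝ)^2 - 2*(m:ℝ)*Real.cos (2*Real.pi*(j:ℝ)/((k:ℕ):ℝ)) + 1)
      = (s:ℝ) * Real.log ((n:ℝ)^2 - 2*(n:ℝ)*Real.cos (2*Real.pi*(j:ℝ)/((k:ℕ):ℝ)) + 1) := by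
  have hk0 : (k:ℕ) ≠ 0 := k.pos.ne'
  set θ : ℝ := 2*Real.pi*(j:ℝ)/((k:ℕ):ℝ) with hθ
  set ω : ℂ := Complex.exp (2*Real.pi*Complex.I*((j:ℂ)/((k:ℕ):ℂ))) with hω
  have hωprim : IsPrimitiveRoot ω (k:ℕ) := Complex.isPrimitiveRoot_exp_of_coprime j k hk0 hj
  have hωθ : ω = Complex.exp ((θ:ℂ) * Complex.I) := by
    rw [hω, hθ]
    congr 1
    push_cast
    have : ((k:ℕ):ℂ) ≠ 0 := by exact_mod_cast hk0
    field_simp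
  have hre : ω.re = Real.cos θ := by rw [hωθ]; exact Complex.exp_ofReal_mul_I_re θ
  have habs1 : ‖ω‖ = 1 := by rw [hωθ]; exact Complex.norm_exp_ofReal_mul_I θ
  have hsq1 : ω.re^2 + ω.im^2 = 1 := by
    have h := Complex.sq_norm ω
    rw [habs1] at h
    rw [Complex.normSq_apply] at h
    nlinarith [h]
  -- ω ≠ 1 and ω ≠ -1
  have hc1 : ω.re < 1 := by
    rcases lt_or_ge ω.re 1 with h | h
    · exact h
    exfalso
    have hre1 : ω.re = 1 := by nlinarith
    have him0 : ω.im = 0 := by nlinarith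
    have : ω = 1 := Complex.ext (by simpa using hre1) (by simpa using him0)
    have horder := hωprim.eq_orderOf
    rw [this, orderOf_one] at horder
    omega
  have hcm1 : -1 < ω.re := by
    rcases lt_or_ge (-1 : ℝ) ω.re with h | h
    · exact h
    exfalso
    have hre1 : ω.re = -1 := by nlinarith
    have him0 : ω.im = 0 := by nlinarith
    have hωm1 : ω = -1 := Complex.ext (by simpa using hre1) (by simpa using him0)
    have horder := hωprim.eq_orderOf
    rw [hωm1, orderOf_neg_one] at horder
    have : ringChar ℂ ≠ 2 := by
      rw [ringChar.eq_zero]; omega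
    simp [this] at horder
    omega
  obtain ⟨σ, hσ⟩ := exists_embedding k hζ hωprim
  -- apply σ to the dependence relation
  have h1 : (σ (-(m : CyclotomicField k ℚ) + ζ)) ^ r = (σ (-(n : CyclotomicField k ℚ) + ζ)) ^ s := by
    rw [← map_zpow₀, ← map_zpow₀, hdep]
  rw [map_add, map_add, map_neg, map_neg, map_natCast, map_natCast, hσ] at h1
  -- absolute values
  have habs : (‖-(m:ℂ) + ω‖) ^ r = (‖-(n:ℂ) + ω‖) ^ s := by
    rw [← norm_zpow, ← norm_zpow, h1]
  -- normSq formulas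
  have hnormm : (‖-(m:ℂ) + ω‖)^2 = (m:ℝ)^2 - 2*(m:ℝ)*Real.cos θ + 1 := by
    rw [Complex.sq_norm, Complex.normSq_apply]
    simp only [Complex.add_re, Complex.add_im, Complex.neg_re, Complex.neg_im,
      Complex.natCast_re, Complex.natCast_im]
    rw [← hre]
    nlinarith [hsq1]
  have hnormn : (‖-(n:ℂ) + ω‖)^2 = (n:ℝ)^2 - 2*(n:ℝ)*Real.cos θ + 1 := by
    rw [Complex.sq_norm, Complex.normSq_apply]
    simp only [Complex.add_re, Complex.add_im, Complex.neg_re, Complex.neg_im,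
      Complex.natCast_re, Complex.natCast_im]
    rw [← hre]
    nlinarith [hsq1]
  -- take logs
  have hlog := congrArg Real.log habs
  rw [Real.log_zpow, Real.log_zpow] at hlog
  have h2 : (r:ℝ) * ((‖-(m:ℂ) + ω‖)^2).log = (s:ℝ) * ((‖-(n:ℂ) + ω‖)^2).log := by
    rw [Real.log_pow, Real.log_pow]
    push_cast
    nlinarith [hlog]
  rw [hnormm, hnormn] at h2
  exact h2
set_option maxHeartbeats 1000000 in
lemma perRoot (k : ℕ+) {ζ : CyclotomicField k ℚ} (hζ : IsPrimitiveRoot ζ (k:ℕ))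
    (m n : ℕ) (r s : ℤ)
    (hdep : (-(m : CyclotomicField k ℚ) + ζ) ^ r = (-(n : CyclotomicField k ℚ) + ζ) ^ s)
    {ω : ℂ} (hω : IsPrimitiveRoot ω (k:ℕ)) :
    (‖-(m:ℂ) + ω‖) ^ r = (‖-(n:ℂ) + ω‖) ^ s := by
  obtain ⟨σ, hσ⟩ := exists_embedding k hζ hω
  have h1 : (σ (-(m : CyclotomicField k ℚ) + ζ)) ^ r = (σ (-(n : CyclotomicField k ℚ) + ζ)) ^ s := by
    rw [← map_zpow₀, ← map_zpow₀, hdep]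
  rw [map_add, map_add, map_neg, map_neg, map_natCast, map_natCast, hσ] at h1
  rw [← norm_zpow, ← norm_zpow, h1]

lemma root_re_bounds {k : ℕ} (hk : 3 ≤ k) {ω : ℂ} (hω : IsPrimitiveRoot ω k) :
    ‖ω‖ = 1 ∧ -1 < ω.re ∧ ω.re < 1 := by
  have habs1 : ‖ω‖ = 1 := by
    exact hω.norm'_eq_one (by omega)
  have hsq1 : ω.re^2 + ω.im^2 = 1 := by
    have h := Complex.sq_norm ω
    rw [habs1] at h
    rw [Complex.normSq_apply] at h
    nlinarith [h]
  have hrele : ω.re ≤ 1 := by nlinarith [sq_nonneg ω.im]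
  have hrege : -1 ≤ ω.re := by nlinarith [sq_nonneg ω.im]
  refine ⟨habs1, ?_, ?_⟩
  · rcases lt_or_ge (-1:ℝ) ω.re with h | h
    · exact h
    exfalso
    have hre1 : ω.re = -1 := le_antisymm h hrege
    have him0 : ω.im = 0 := by nlinarith
    have hωm1 : ω = -1 := Complex.ext (by simpa using hre1) (by simpa using him0)
    have horder := hω.eq_orderOf
    rw [hωm1, orderOf_neg_one] at horder
    have h2 : ringChar ℂ ≠ 2 := by rw [ringChar.eq_zero]; omega
    simp [h2] at horder
    omega
  · rcases lt_or_ge ω.re 1 with h | h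
    · exact h
    exfalso
    have hre1 : ω.re = 1 := le_antisymm hrele h
    have him0 : ω.im = 0 := by nlinarith
    have hω1 : ω = 1 := Complex.ext (by simpa using hre1) (by simpa using him0)
    have horder := hω.eq_orderOf
    rw [hω1, orderOf_one] at horder
    omega

lemma abs_sq_shift (x : ℕ) {ω : ℂ} (h1 : ‖ω‖ = 1) :
    (‖-(x:ℂ) + ω‖)^2 = (x:ℝ)^2 - 2*(x:ℝ)*ω.re + 1 := by
  have hsq1 : ω.re^2 + ω.im^2 = 1 := by
    have h := Complex.sq_norm ω
    rw [h1] at h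
    rw [Complex.normSq_apply] at h
    nlinarith [h]
  rw [Complex.sq_norm, Complex.normSq_apply]
  simp only [Complex.add_re, Complex.add_im, Complex.neg_re, Complex.neg_im,
    Complex.natCast_re, Complex.natCast_im]
  nlinarith [hsq1]

set_option maxHeartbeats 2000000 in
lemma SMALL (a m : ℕ) (k : ℕ+) (hk : 3 ≤ (k:ℕ)) (hφ : Nat.totient (k:ℕ) ≤ 4)
    (ha : 1 ≤ a) (hm : 8*a+17 ≤ m) {ζ : CyclotomicField k ℚ} (hζ : IsPrimitiveRoot ζ (k:ℕ)) :
    MultIndep (-(m : CyclotomicField k ℚ) + ζ) (-((m + a : ℕ) : CyclotomicField k ℚ) + ζ) := by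
  intro r s hdep
  set n := m + a with hn
  have hk0 : (k:ℕ) ≠ 0 := k.pos.ne'
  set P := primitiveRoots (k:ℕ) ℂ with hP
  have E : ∀ ω ∈ P, (‖-(m:ℂ) + ω‖) ^ r = (‖-(n:ℂ) + ω‖) ^ s := by
    intro ω hω
    exact perRoot k hζ m n r s hdep ((mem_primitiveRoots k.pos).mp hω)
  have hm2 : 2 ≤ m := by omega
  have hmr : (2:ℝ) ≤ (m:ℝ) := by exact_mod_cast hm2
  have hanr : (m:ℝ) + 1 ≤ (n:ℝ) := by
    have : m + 1 ≤ n := by omega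
    exact_mod_cast this
  have hfacts : ∀ ω ∈ P, 1 < ‖-(m:ℂ) + ω‖
      ∧ ‖-(m:ℂ) + ω‖ < ‖-(n:ℂ) + ω‖
      ∧ (m:ℝ) - 1 ≤ ‖-(m:ℂ) + ω‖
      ∧ ‖-(n:ℂ) + ω‖ ≤ (n:ℝ) + 1 := by
    intro ω hω
    have hprim := (mem_primitiveRoots k.pos).mp hω
    obtain ⟨h1, hrem, hre1⟩ := root_re_bounds hk hprim
    have hfm := abs_sq_shift m h1
    have hfn := abs_sq_shift n h1
    have hf0 : 0 ≤ ‖-(m:ℂ) + ω‖ := norm_nonneg _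
    have hg0 : 0 ≤ ‖-(n:ℂ) + ω‖ := norm_nonneg _
    refine ⟨?_, ?_, ?_, ?_⟩
    · apply one_lt_of_sq hf0
      rw [hfm]
      nlinarith [mul_pos (show (0:ℝ) < (m:ℝ) by linarith) (show (0:ℝ) < (m:ℝ) - 2*ω.re by linarith)]
    · apply lt_of_sq_lt' hf0 hg0
      rw [hfm, hfn]
      nlinarith [mul_pos (show (0:ℝ) < (n:ℝ) - (m:ℝ) by linarith)
        (show (0:ℝ) < (n:ℝ) + (m:ℝ) - 2*ω.re by linarith)]
    · apply le_of_sq_le' (by linarith) hf0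
      rw [hfm]
      nlinarith [mul_nonneg (show (0:ℝ) ≤ 2*(m:ℝ) by linarith) (show (0:ℝ) ≤ 1 - ω.re by linarith)]
    · apply le_of_sq_le' hg0 (by linarith)
      rw [hfn]
      nlinarith [mul_nonneg (show (0:ℝ) ≤ 2*(n:ℝ) by linarith) (show (0:ℝ) ≤ ω.re + 1 by linarith)]
  -- fixed primitive root
  have hω0prim : IsPrimitiveRoot (Complex.exp (2*Real.pi*Complex.I/(k:ℕ))) (k:ℕ) :=
    Complex.isPrimitiveRoot_exp (k:ℕ) hk0
  set ω0 : ℂ := Complex.exp (2*Real.pi*Complex.I/(k:ℕ)) with hω0def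
  have hω0 : ω0 ∈ P := (mem_primitiveRoots k.pos).mpr hω0prim
  obtain ⟨hf1, hfg, -, -⟩ := hfacts ω0 hω0
  have hlogeq : (r:ℝ) * Real.log (‖-(m:ℂ) + ω0‖)
      = (s:ℝ) * Real.log (‖-(n:ℂ) + ω0‖) := by
    have := congrArg Real.log (E ω0 hω0)
    rwa [Real.log_zpow, Real.log_zpow] at this
  have hlf : 0 < Real.log (‖-(m:ℂ) + ω0‖) := Real.log_pos hf1
  have hlg : 0 < Real.log (‖-(n:ℂ) + ω0‖) := Real.log_pos (lt_trans hf1 hfg)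
  rcases eq_or_ne r 0 with rfl | hr
  · refine ⟨rfl, ?_⟩
    simp only [Int.cast_zero, zero_mul] at hlogeq
    have : (s:ℝ) = 0 := by
      rcases mul_eq_zero.mp hlogeq.symm with h | h
      · exact h
      · linarith
    exact_mod_cast this
  rcases eq_or_ne s 0 with rfl | hs
  · exfalso
    simp only [Int.cast_zero, zero_mul] at hlogeq
    have : (r:ℝ) = 0 := by
      rcases mul_eq_zero.mp hlogeq with h | h
      · exact h
      · linarith
    exact hr (by exact_mod_cast this)
  exfalso
  -- natural exponents
  obtain ⟨r', s', hr'pos, hs'pos, E'⟩ : ∃ r' s' : ℕ, 0 < r' ∧ 0 < s' ∧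
      ∀ ω ∈ P, (‖-(m:ℂ)+ω‖)^r' = (‖-(n:ℂ)+ω‖)^s' := by
    have habs : ∀ ω ∈ P, (0:ℝ) < ‖-(m:ℂ)+ω‖ ∧ (0:ℝ) < ‖-(n:ℂ)+ω‖ := by
      intro ω hω
      obtain ⟨h1, h2, -, -⟩ := hfacts ω hω
      exact ⟨lt_trans one_pos h1, lt_trans one_pos (lt_trans h1 h2)⟩
    rcases lt_trichotomy r 0 with hneg | h0 | hpos
    · have hsneg : s < 0 := by
        by_contra hge
        push_neg at hge
        have hs' : 0 < s := lt_of_le_of_ne hge (Ne.symm hs)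
        have h1 : (r:ℝ) * Real.log (‖-(m:ℂ) + ω0‖) < 0 :=
          mul_neg_of_neg_of_pos (by exact_mod_cast hneg) hlf
        have h2 : 0 < (s:ℝ) * Real.log (‖-(n:ℂ) + ω0‖) :=
          mul_pos (by exact_mod_cast hs') hlg
        linarith
      refine ⟨(-r).toNat, (-s).toNat, by omega, by omega, ?_⟩
      intro ω hω
      have hE := E ω hω
      have hE' : (‖-(m:ℂ)+ω‖)^(-r) = (‖-(n:ℂ)+ω‖)^(-s) := by
        rw [zpow_neg, zpow_neg, hE]
      have e1 : ((-r).toNat : ℤ) = -r := Int.toNat_of_nonneg (by omega)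
      have e2 : ((-s).toNat : ℤ) = -s := Int.toNat_of_nonneg (by omega)
      have := hE'
      rw [← e1, ← e2, zpow_natCast, zpow_natCast] at this
      exact this
    · exact absurd h0 hr
    · have hspos : 0 < s := by
        by_contra hge
        push_neg at hge
        have hs' : s < 0 := lt_of_le_of_ne hge hs
        have h1 : 0 < (r:ℝ) * Real.log (‖-(m:ℂ) + ω0‖) :=
          mul_pos (by exact_mod_cast hpos) hlf
        have h2 : (s:ℝ) * Real.log (‖-(n:ℂ) + ω0‖) < 0 :=
          mul_neg_of_neg_of_pos (by exact_mod_cast hs') hlg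
        linarith
      refine ⟨r.toNat, s.toNat, by omega, by omega, ?_⟩
      intro ω hω
      have hE := E ω hω
      have e1 : (r.toNat : ℤ) = r := Int.toNat_of_nonneg (by omega)
      have e2 : (s.toNat : ℤ) = s := Int.toNat_of_nonneg (by omega)
      rw [← e1, ← e2, zpow_natCast, zpow_natCast] at hE
      exact hE
  -- r' > s'
  have hlog' : (r':ℝ) * Real.log (‖-(m:ℂ) + ω0‖)
      = (s':ℝ) * Real.log (‖-(n:ℂ) + ω0‖) := by
    have := congrArg Real.log (E' ω0 hω0)
    rwa [Real.log_pow, Real.log_pow] at this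
  have hloglt : Real.log (‖-(m:ℂ) + ω0‖) < Real.log (‖-(n:ℂ) + ω0‖) :=
    Real.log_lt_log (lt_trans one_pos hf1) hfg
  have hr's' : s' < r' := by
    by_contra hle
    push_neg at hle
    have hc : (r':ℝ) ≤ (s':ℝ) := by exact_mod_cast hle
    have hs'r : (0:ℝ) < s' := by exact_mod_cast hs'pos
    nlinarith
  -- products
  have hprod : (∏ ω ∈ P, ‖-(m:ℂ)+ω‖)^r' = (∏ ω ∈ P, ‖-(n:ℂ)+ω‖)^s' := by
    rw [← Finset.prod_pow, ← Finset.prod_pow]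
    exact Finset.prod_congr rfl E'
  have key : ∀ x : ℕ, ((((Polynomial.cyclotomic (k:ℕ) ℤ).eval (x:ℤ) : ℤ) : ℝ)) = ∏ ω ∈ P, ‖-(x:ℂ)+ω‖ := by
    intro x
    have h1 : ∏ ω ∈ P, ‖-(x:ℂ)+ω‖ = ‖∏ ω ∈ P, ((x:ℂ) - ω)‖ := by
      rw [Complex.norm_prod]
      refine Finset.prod_congr rfl ?_
      intro ω hω
      rw [show -(x:ℂ)+ω = -((x:ℂ) - ω) by ring, norm_neg]
    have h2 : ∏ ω ∈ P, ((x:ℂ) - ω) = (Polynomial.cyclotomic (k:ℕ) ℂ).eval (x:ℂ) := by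
      rw [cyclotomic_eq_prod_X_sub_primitiveRoots hω0prim]
      simp [Polynomial.eval_prod, hP]
    have h3 : (Polynomial.cyclotomic (k:ℕ) ℂ).eval (x:ℂ) = ((((Polynomial.cyclotomic (k:ℕ) ℤ).eval (x:ℤ) : ℤ) : ℂ)) := by
      have h := Polynomial.cyclotomic.eval_apply (x:ℤ) (k:ℕ) (Int.castRingHom ℂ)
      simpa using h
    have hpos : 0 < (Polynomial.cyclotomic (k:ℕ) ℤ).eval (x:ℤ) :=
      Polynomial.cyclotomic_pos (by omega) _
    rw [h1, h2, h3, Complex.norm_intCast, abs_of_pos (by exact_mod_cast hpos)]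
  set AZ := (Polynomial.cyclotomic (k:ℕ) ℤ).eval (m:ℤ) with hAZ
  set BZ := (Polynomial.cyclotomic (k:ℕ) ℤ).eval (n:ℤ) with hBZ
  have hAr : ((AZ:ℝ)) = ∏ ω ∈ P, ‖-(m:ℂ)+ω‖ := key m
  have hBr : ((BZ:ℝ)) = ∏ ω ∈ P, ‖-(n:ℂ)+ω‖ := key n
  have hP0 : P.Nonempty := ⟨ω0, hω0⟩
  have hA1 : (1:ℝ) < (AZ:ℝ) := by
    rw [hAr]
    have := Finset.prod_lt_prod_of_nonempty (f := fun _ : ℂ => (1:ℝ))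
      (g := fun ω : ℂ => ‖-(m:ℂ)+ω‖) (fun ω _ => one_pos)
      (fun ω hω => (hfacts ω hω).1) hP0
    simpa using this
  have hB1 : (1:ℝ) < (BZ:ℝ) := by
    rw [hBr]
    have := Finset.prod_lt_prod_of_nonempty (f := fun _ : ℂ => (1:ℝ))
      (g := fun ω : ℂ => ‖-(n:ℂ)+ω‖) (fun ω _ => one_pos)
      (fun ω hω => lt_trans (hfacts ω hω).1 (hfacts ω hω).2.1) hP0
    simpa using this
  set A := AZ.toNat with hA
  set B := BZ.toNat with hB
  have hAcast : ((A:ℤ)) = AZ := Int.toNat_of_nonneg (by exact_mod_cast le_of_lt (lt_trans zero_lt_one hA1))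
  have hBcast : ((B:ℤ)) = BZ := Int.toNat_of_nonneg (by exact_mod_cast le_of_lt (lt_trans zero_lt_one hB1))
  have hAcastR : ((A:ℝ)) = ((AZ:ℝ)) := by exact_mod_cast congrArg (fun z : ℤ => (z:ℝ)) hAcast
  have hBcastR : ((B:ℝ)) = ((BZ:ℝ)) := by exact_mod_cast congrArg (fun z : ℤ => (z:ℝ)) hBcast
  have hA2 : 2 ≤ A := by
    have : (1:ℝ) < (A:ℝ) := by rw [hAcastR]; exact hA1
    exact_mod_cast Nat.succ_le_of_lt (by exact_mod_cast this)
  have hB2 : 1 ≤ B := by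
    have : (1:ℝ) < (B:ℝ) := by rw [hBcastR]; exact hB1
    have : 1 < B := by exact_mod_cast this
    omega
  have hnatpow : A ^ r' = B ^ s' := by
    have hreal : ((A:ℝ))^r' = ((B:ℝ))^s' := by
      rw [hAcastR, hBcastR, hAr, hBr]
      exact hprod
    have : (((A^r' : ℕ)):ℝ) = (((B^s' : ℕ)):ℝ) := by push_cast; exact hreal
    exact_mod_cast this
  have h2AB : 2 * A ≤ B := two_mul_le_of_pow_eq_pow hA2 hB2 hnatpow hs'pos hr's'
  -- size bounds
  set d := P.card with hd
  have hd4 : d ≤ 4 := by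
    rw [hd, hP, Complex.card_primitiveRoots]
    exact hφ
  have hd1 : 1 ≤ d := Finset.card_pos.mpr hP0
  have hAlb : ((m-1:ℕ):ℝ)^d ≤ (A:ℝ) := by
    rw [hAcastR, hAr]
    calc ((m-1:ℕ):ℝ)^d = ∏ _ω ∈ P, ((m-1:ℕ):ℝ) := by rw [Finset.prod_const]
    _ ≤ ∏ ω ∈ P, ‖-(m:ℂ)+ω‖ := by
        apply Finset.prod_le_prod
        · intro ω hω; positivity
        · intro ω hω
          have := (hfacts ω hω).2.2.1
          have hcast : ((m-1:ℕ):ℝ) = (m:ℝ) - 1 := by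
            push_cast [Nat.cast_sub (by omega : 1 ≤ m)]; ring
          rw [hcast]; exact this
  have hBub : (B:ℝ) ≤ ((n+1:ℕ):ℝ)^d := by
    rw [hBcastR, hBr]
    calc ∏ ω ∈ P, ‖-(n:ℂ)+ω‖ ≤ ∏ _ω ∈ P, ((n+1:ℕ):ℝ) := by
          apply Finset.prod_le_prod
          · intro ω hω; exact norm_nonneg _
          · intro ω hω
            have := (hfacts ω hω).2.2.2
            push_cast
            exact this
    _ = ((n+1:ℕ):ℝ)^d := by rw [Finset.prod_const]
  have hAlbn : (m-1)^d ≤ A := by exact_mod_cast (by push_cast at hAlb ⊢; exact_mod_cast hAlb : (((m-1)^d : ℕ):ℝ) ≤ ((A:ℕ):ℝ))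
  have hBubn : B ≤ (n+1)^d := by exact_mod_cast (by push_cast at hBub ⊢; exact_mod_cast hBub : ((B:ℕ):ℝ) ≤ (((n+1)^d : ℕ):ℝ))
  -- final contradiction
  have harith : (n+1)^d < 2*((m-1)^d) := by
    have := arith_bound ha (show 8*a+16 ≤ m-1 by omega) hd1 hd4
    have he : m - 1 + a + 2 = n + 1 := by omega
    rwa [he] at this
  omega

set_option maxHeartbeats 2000000 in
lemma BIG (a m : ℕ) (k : ℕ+) (hk : 3 ≤ (k:ℕ)) (hφ : 5 ≤ Nat.totient (k:ℕ))
    (ha : 1 ≤ a) (hm : 1 ≤ m) {ζ : CyclotomicField k ℚ} (hζ : IsPrimitiveRoot ζ (k:ℕ)) :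
    MultIndep (-(m : CyclotomicField k ℚ) + ζ) (-((m + a : ℕ) : CyclotomicField k ℚ) + ζ) := by
  intro r s hdep
  set n := m + a with hn
  have hk7 : 7 ≤ (k:ℕ) := by
    by_contra h
    push_neg at h
    have h36 : (k:ℕ) = 3 ∨ (k:ℕ) = 4 ∨ (k:ℕ) = 5 ∨ (k:ℕ) = 6 := by omega
    rcases h36 with h' | h' | h' | h' <;> rw [h'] at hφ <;> exact absurd hφ (by decide)
  obtain ⟨j1, j2, j3, hj1pos, h12, h23, h3k, hcop1, hcop2, hcop3⟩ := exists_three_coprime hk hφ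
  obtain ⟨js, hcops, hjspos, hjs1, hjs2⟩ := exists_mid_coprime hk7
  have hKpos : (0:ℝ) < ((k:ℕ):ℝ) := by exact_mod_cast k.pos
  have hπ := Real.pi_pos
  -- the four log equations
  have e1 := perJ k hk hζ m n r s hdep j1 hcop1.symm
  have e2 := perJ k hk hζ m n r s hdep j2 hcop2.symm
  have e3 := perJ k hk hζ m n r s hdep j3 hcop3.symm
  have es := perJ k hk hζ m n r s hdep js hcops.symm
  set θ1 : ℝ := 2*Real.pi*(j1:ℝ)/((k:ℕ):ℝ) with hθ1
  set θ2 : ℝ := 2*Real.pi*(j2:ℝ)/((k:ℕ):ℝ) with hθ2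
  set θ3 : ℝ := 2*Real.pi*(j3:ℝ)/((k:ℕ):ℝ) with hθ3
  set θs : ℝ := 2*Real.pi*(js:ℝ)/((k:ℕ):ℝ) with hθs
  -- angle bounds
  have hj12R : (j1:ℝ) < (j2:ℝ) := by exact_mod_cast h12
  have hj23R : (j2:ℝ) < (j3:ℝ) := by exact_mod_cast h23
  have hθ1pos : 0 < θ1 := by
    rw [hθ1]
    have : (0:ℝ) < (j1:ℝ) := by exact_mod_cast hj1pos
    positivity
  have hθ12 : θ1 < θ2 := by rw [hθ1, hθ2]; gcongr
  have hθ23 : θ2 < θ3 := by rw [hθ2, hθ3]; gcongr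
  have hθ3pi : θ3 < Real.pi := by
    rw [hθ3, div_lt_iff₀ hKpos]
    have : (2*(j3:ℝ)) < ((k:ℕ):ℝ) := by exact_mod_cast h3k
    nlinarith
  -- cosine order facts
  have hmem : ∀ θ : ℝ, 0 ≤ θ → θ ≤ Real.pi → θ ∈ Set.Icc 0 Real.pi := fun θ h1 h2 => ⟨h1, h2⟩
  have hc1lt1 : Real.cos θ1 < 1 := by
    have := Real.strictAntiOn_cos (hmem 0 le_rfl (le_of_lt hπ))
      (hmem θ1 (le_of_lt hθ1pos) (by linarith)) hθ1pos
    simpa using this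
  have hc12 : Real.cos θ2 < Real.cos θ1 := by
    exact Real.strictAntiOn_cos (hmem θ1 (le_of_lt hθ1pos) (by linarith))
      (hmem θ2 (by linarith) (by linarith)) hθ12
  have hc23 : Real.cos θ3 < Real.cos θ2 := by
    exact Real.strictAntiOn_cos (hmem θ2 (by linarith) (by linarith))
      (hmem θ3 (by linarith) (le_of_lt hθ3pi)) hθ23
  have hc3m1 : -1 < Real.cos θ3 := by
    have := Real.strictAntiOn_cos (hmem θ3 (by linarith) (le_of_lt hθ3pi))
      (hmem Real.pi (le_of_lt hπ) le_rfl) hθ3pi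
    simpa using this
  -- middle angle
  have hθspos : Real.pi/3 < θs := by
    rw [hθs, lt_div_iff₀ hKpos]
    have : ((k:ℕ):ℝ) < 6*(js:ℝ) := by exact_mod_cast hjs1
    nlinarith
  have hθsub : θs < 5*Real.pi/3 := by
    rw [hθs, div_lt_iff₀ hKpos]
    have : (6*(js:ℝ)) < 5*((k:ℕ):ℝ) := by exact_mod_cast hjs2
    nlinarith
  have hcs : Real.cos θs < 1/2 := by
    have hpi3 : (0:ℝ) ≤ Real.pi/3 := by linarith
    rcases le_or_gt θs Real.pi with hle | hgt
    · have := Real.strictAntiOn_cos (hmem (Real.pi/3) hpi3 (by linarith))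
        (hmem θs (by linarith) hle) hθspos
      rwa [Real.cos_pi_div_three] at this
    · have hcos_eq : Real.cos θs = Real.cos (2*Real.pi - θs) := (Real.cos_two_pi_sub θs).symm
      rw [hcos_eq]
      have h1 : Real.pi/3 < 2*Real.pi - θs := by linarith
      have h2 : 2*Real.pi - θs < Real.pi := by linarith
      have := Real.strictAntiOn_cos (hmem (Real.pi/3) hpi3 (by linarith))
        (hmem (2*Real.pi - θs) (by linarith) (le_of_lt h2)) h1
      rwa [Real.cos_pi_div_three] at this
  have hcsm1 : (-1:ℝ) ≤ Real.cos θs := Real.neg_one_le_cos θs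
  -- apply the real lemma
  have hmR : (1:ℝ) ≤ (m:ℝ) := by exact_mod_cast hm
  have hnR : (m:ℝ) + 1 ≤ (n:ℝ) := by
    have : m + 1 ≤ n := by omega
    exact_mod_cast this
  exact BIGreal hmR hnR hc1lt1 hc12 hc23 hc3m1 hcsm1 hcs e1 e2 e3 es

theorem stmt3 (a : ℕ) (ha : 0 < a) :
    {q : ℕ × ℕ+ | 0 < q.1 ∧ 3 ≤ (q.2 : ℕ) ∧
      ∃ ζ : CyclotomicField q.2 ℚ, IsPrimitiveRoot ζ (q.2 : ℕ) ∧
        ¬ MultIndep (-(q.1 : CyclotomicField q.2 ℚ) + ζ)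
          (-((q.1 + a : ℕ) : CyclotomicField q.2 ℚ) + ζ)}.Finite := by
  have hfin : Set.Finite {q : ℕ × ℕ+ | q.1 ≤ 8*a+17 ∧ q.2 ≤ (12:ℕ+)} := by
    apply Set.Finite.subset (Set.Finite.prod (Set.finite_Iic (8*a+17)) (Set.finite_Iic (12:ℕ+)))
    intro q hq
    exact ⟨hq.1, hq.2⟩
  apply Set.Finite.subset hfin
  rintro ⟨m, k⟩ ⟨hm0, hk3, ζ, hζ, hdep⟩
  simp only [Set.mem_setOf_eq]
  have hφ4 : Nat.totient (k:ℕ) ≤ 4 := by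
    by_contra h
    push_neg at h
    exact hdep (BIG a m k hk3 h ha hm0 hζ)
  constructor
  · by_contra hmgt
    push_neg at hmgt
    exact hdep (SMALL a m k hk3 hφ4 ha (by omega) hζ)
  · have h12 : (k:ℕ) ≤ 12 := totient_le_four k.pos hφ4
    exact_mod_cast h12
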